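/- arXiv:2002.09798 — 5 statements merged into one kernel-verified Lean document; each statement's English description precedes it below -/
import Mathlib

section
/- Let S be a set of self-maps and suppose each map in a composition semigroup has degree at least 2 (so deg(f) ≥ 2 for all composites f of elements of S). Let h: points → ℝ≥0 be a function, B_S > 0 a constant, and suppose for every composite f and every point Q we have deg(f)·(h(Q) − B_S) ≤ h(f(Q)) ≤ deg(f)·(h(Q) + B_S), where deg is multiplicative under composition. If h(P) > 3·B_S, then for any sequence γ = (θ_i) of elements of S, the iterates γ_n^+(P) = θ_1∘···∘θ_n(P) are pairwise distinct, i.e., γ_n^+(P) ≠ γ_m^+(P) whenever n ≠ m. -/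
/-- If heights transform under composites `f` by
`deg f · (h Q − B_S) ≤ h (f Q) ≤ deg f · (h Q + B_S)` with all degrees at least 2
(multiplicative under composition, encoded via lists of maps), and `h P > 3·B_S`,
then the right iterates `γ_n⁺(P) = θ_0 ∘ ⋯ ∘ θ_{n-1}(P)` are pairwise distinct. -/
theorem stmt1 {X : Type*} (θ : ℕ → X → X) (D : ℕ → ℝ)
    (hD : ∀ i, 2 ≤ D i) (h : X → ℝ)
    (BS : ℝ) (hBS : 0 < BS)
    (hht : ∀ (L : List ℕ) (Q : X),
      (L.map D).prod * (h Q - BS) ≤ h ((L.foldr (fun i g => θ i ∘ g) id) Q) ∧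
      h ((L.foldr (fun i g => θ i ∘ g) id) Q) ≤ (L.map D).prod * (h Q + BS))
    (P : X) (hP : 3 * BS < h P) :
    ∀ n m : ℕ, n ≠ m →
      ((List.range n).foldr (fun i g => θ i ∘ g) id) P ≠
      ((List.range m).foldr (fun i g => θ i ∘ g) id) P := by
  have hpos : ∀ n : ℕ, 0 < ((List.range n).map D).prod := by
    intro n
    apply List.prod_pos
    intro x hx
    simp only [List.mem_map, List.mem_range] at hx
    obtain ⟨i, _, rfl⟩ := hx
    linarith [hD i]
  have hstep : ∀ n : ℕ, ((List.range n).map D).prod * 2 ≤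
      ((List.range (n+1)).map D).prod := by
    intro n
    have heq : ((List.range (n+1)).map D).prod = ((List.range n).map D).prod * D n := by
      simp [List.range_succ]
    rw [heq]
    exact mul_le_mul_of_nonneg_left (hD n) (le_of_lt (hpos n))
  have hmono : ∀ m n : ℕ, m < n →
      2 * ((List.range m).map D).prod ≤ ((List.range n).map D).prod := by
    intro m n hmn
    induction n with
    | zero => omega
    | succ k ih =>
      rcases Nat.lt_succ_iff_lt_or_eq.mp hmn with h1 | h1
      · have h2 := ih h1
        have h3 := hstep k
        have h4 := hpos k
        linarith
      · subst h1; linarith [hstep m]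
  have key : ∀ m n : ℕ, m < n →
      ((List.range n).foldr (fun i g => θ i ∘ g) id) P ≠
      ((List.range m).foldr (fun i g => θ i ∘ g) id) P := by
    intro m n hmn heq
    obtain ⟨h1n, _⟩ := hht (List.range n) P
    obtain ⟨_, h2m⟩ := hht (List.range m) P
    rw [heq] at h1n
    have hprod := hmono m n hmn
    have hposm := hpos m
    have hgap : 0 < h P - BS := by linarith
    nlinarith [mul_le_mul_of_nonneg_right hprod (le_of_lt hgap),
      mul_pos hposm (show (0:ℝ) < h P - 3 * BS by linarith)]
  intro n m hnm
  rcases Nat.lt_or_ge n m with h1 | h1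
  · exact fun e => key n m h1 e.symm
  · exact key m n (lt_of_le_of_ne h1 (Ne.symm hnm))
end

section
/- Let S be a free commutative monoid with basis {φ_1,…,φ_s} and weighted length ℓ defined by ℓ(φ_1^{e_1}···φ_s^{e_s}) = ∑ e_i·log(d_i) for integers d_i ≥ 2. Suppose h: S → ℝ is a function and there exist constants 0 < A ≤ B' such that A·exp(ℓ(f)) ≤ h(f) ≤ B'·exp(ℓ(f)) for all f ∈ S. Then lim_{B→∞} #{f ∈ S : h(f) ≤ B}/(log B)^s = 1/(s!·∏_{i=1}^s log(d_i)). -/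
open Finset Filter

/-- helper: a^(n+1) - b^(n+1) ≤ (n+1) a^n (a-b) for 0 ≤ b ≤ a -/
lemma pow_sub_pow_le_succ {a b : ℝ} (hb : 0 ≤ b) (hba : b ≤ a) (n : ℕ) :
    a ^ (n + 1) - b ^ (n + 1) ≤ (n + 1) * a ^ n * (a - b) := by
  have ha : 0 ≤ a := hb.trans hba
  rw [← geom_sum₂_mul a b (n + 1)]
  have hsum : (∑ i ∈ range (n + 1), a ^ i * b ^ (n - i)) ≤ (n + 1) * a ^ n := by
    calc (∑ i ∈ range (n + 1), a ^ i * b ^ (n - i))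
        ≤ ∑ i ∈ range (n + 1), a ^ n := by
          refine Finset.sum_le_sum fun i hi => ?_
          have hi' : i ≤ n := Nat.lt_succ_iff.mp (Finset.mem_range.mp hi)
          calc a ^ i * b ^ (n - i) ≤ a ^ i * a ^ (n - i) := by
                exact mul_le_mul_of_nonneg_left (pow_le_pow_left₀ hb hba _) (pow_nonneg ha _)
            _ = a ^ n := by rw [← pow_add]; congr 1; omega
      _ = (n + 1) * a ^ n := by rw [Finset.sum_const, Finset.card_range]; push_cast; ring
  have h2 : 0 ≤ a - b := sub_nonneg.mpr hba
  calc (∑ i ∈ range (n + 1), a ^ i * b ^ (n + 1 - 1 - i)) * (a - b)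
      = (∑ i ∈ range (n + 1), a ^ i * b ^ (n - i)) * (a - b) := by norm_num
    _ ≤ ((n + 1) * a ^ n) * (a - b) := mul_le_mul_of_nonneg_right hsum h2
    _ = (n + 1) * a ^ n * (a - b) := by ring

/-- helper: (n+1) x^n (y-x) ≤ y^(n+1) - x^(n+1) for 0 ≤ x ≤ y -/
lemma succ_mul_pow_sub_le {x y : ℝ} (hx : 0 ≤ x) (hxy : x ≤ y) (n : ℕ) :
    (n + 1) * x ^ n * (y - x) ≤ y ^ (n + 1) - x ^ (n + 1) := by
  have hy : 0 ≤ y := hx.trans hxy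
  rw [← geom_sum₂_mul y x (n + 1)]
  have hsum : (n + 1) * x ^ n ≤ ∑ i ∈ range (n + 1), y ^ i * x ^ (n - i) := by
    calc ((n : ℝ) + 1) * x ^ n = ∑ _i ∈ range (n + 1), x ^ n := by
          rw [Finset.sum_const, Finset.card_range]; push_cast; ring
      _ ≤ ∑ i ∈ range (n + 1), y ^ i * x ^ (n - i) := by
          refine Finset.sum_le_sum fun i hi => ?_
          have hi' : i ≤ n := Nat.lt_succ_iff.mp (Finset.mem_range.mp hi)
          calc x ^ n = x ^ i * x ^ (n - i) := by rw [← pow_add]; congr 1; omega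
            _ ≤ y ^ i * x ^ (n - i) := by
                exact mul_le_mul_of_nonneg_right (pow_le_pow_left₀ hx hxy _) (pow_nonneg hx _)
  have h2 : 0 ≤ y - x := sub_nonneg.mpr hxy
  calc (n + 1) * x ^ n * (y - x) ≤ (∑ i ∈ range (n + 1), y ^ i * x ^ (n - i)) * (y - x) :=
        mul_le_mul_of_nonneg_right hsum h2
    _ = (∑ i ∈ range (n + 1), y ^ i * x ^ (n + 1 - 1 - i)) * (y - x) := by norm_num

/-- lower Riemann-type bound -/
lemma sum_lower {c T : ℝ} (hc : 0 < c) (hT : 0 ≤ T) (n : ℕ) :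
    T ^ (n + 1) / ((n + 1) * c) ≤ ∑ k ∈ range (⌊T / c⌋₊ + 1), (T - k * c) ^ n := by
  set m := ⌊T / c⌋₊ with hm
  set g : ℕ → ℝ := fun k => (max (T - k * c) 0) ^ (n + 1) with hg
  have hnn : ∀ k, k ∈ range (m + 1) → 0 ≤ T - (k : ℝ) * c := by
    intro k hk
    have hk' : k ≤ m := Nat.lt_succ_iff.mp (Finset.mem_range.mp hk)
    have h3 : (k : ℝ) ≤ T / c := le_trans (Nat.cast_le.mpr hk') (Nat.floor_le (by positivity))
    nlinarith [(le_div_iff₀ hc).mp h3]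
  have key : ∀ k ∈ range (m + 1), g k - g (k + 1) ≤ ((n : ℝ) + 1) * c * (T - k * c) ^ n := by
    intro k hk
    have h1 : 0 ≤ T - (k : ℝ) * c := hnn k hk
    have hgk : g k = (T - (k : ℝ) * c) ^ (n + 1) := by
      rw [hg]; simp only [max_eq_left h1]
    set b := max (T - ((k : ℝ) + 1) * c) 0 with hb
    have hgk1 : g (k + 1) = b ^ (n + 1) := by
      rw [hg, hb]; push_cast; ring_nf
    have hb0 : 0 ≤ b := le_max_right _ _
    have hba : b ≤ T - (k : ℝ) * c := by
      rw [hb]; apply max_le _ h1; nlinarith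
    have hsub : T - (k : ℝ) * c - b ≤ c := by
      have h4 : T - ((k : ℝ) + 1) * c ≤ b := le_max_left _ _
      nlinarith
    have h5 := pow_sub_pow_le_succ hb0 hba n
    have hpow : (0 : ℝ) ≤ (T - (k : ℝ) * c) ^ n := pow_nonneg h1 _
    calc g k - g (k + 1) = (T - (k : ℝ) * c) ^ (n + 1) - b ^ (n + 1) := by rw [hgk, hgk1]
      _ ≤ (n + 1) * (T - (k : ℝ) * c) ^ n * (T - (k : ℝ) * c - b) := h5
      _ ≤ (n + 1) * (T - (k : ℝ) * c) ^ n * c := by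
          apply mul_le_mul_of_nonneg_left hsub; positivity
      _ = ((n : ℝ) + 1) * c * (T - k * c) ^ n := by ring
  have tele : ∑ k ∈ range (m + 1), (g k - g (k + 1)) = g 0 - g (m + 1) :=
    Finset.sum_range_sub' g (m + 1)
  have hg0 : g 0 = T ^ (n + 1) := by simp [hg, max_eq_left hT]
  have hgm : g (m + 1) = 0 := by
    have h2 : T / c < (m : ℝ) + 1 := Nat.lt_floor_add_one _
    have h6 : T - ((m : ℝ) + 1) * c < 0 := by nlinarith [(div_lt_iff₀ hc).mp h2]
    have h7 : T - ((m + 1 : ℕ) : ℝ) * c ≤ 0 := by push_cast; linarith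
    rw [hg]; simp only [max_eq_right h7]
    simp
  have hsum := Finset.sum_le_sum key
  rw [tele, hg0, hgm, sub_zero] at hsum
  rw [div_le_iff₀ (by positivity)]
  calc T ^ (n + 1) ≤ ∑ k ∈ range (m + 1), ((n : ℝ) + 1) * c * (T - k * c) ^ n := hsum
    _ = (∑ k ∈ range (m + 1), (T - k * c) ^ n) * ((n + 1) * c) := by
        rw [Finset.sum_mul]; exact Finset.sum_congr rfl fun k _ => by ring

/-- upper Riemann-type bound -/
lemma sum_upper {c : ℝ} (hc : 0 < c) (U : ℝ) (m : ℕ) (hm : 0 ≤ U - m * c) (n : ℕ) :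
    ∑ k ∈ range (m + 1), (U - k * c) ^ n ≤ (U + c) ^ (n + 1) / ((n + 1) * c) := by
  set f : ℕ → ℝ := fun k => (U + c - k * c) ^ (n + 1) with hf
  have hnn : ∀ k, k ≤ m → 0 ≤ U - (k : ℝ) * c := by
    intro k hk
    have : (k : ℝ) * c ≤ (m : ℝ) * c := by
      apply mul_le_mul_of_nonneg_right (Nat.cast_le.mpr hk) hc.le
    linarith
  have key : ∀ k ∈ range (m + 1), ((n : ℝ) + 1) * c * (U - k * c) ^ n ≤ f k - f (k + 1) := by
    intro k hk
    have hk' : k ≤ m := Nat.lt_succ_iff.mp (Finset.mem_range.mp hk)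
    have hx : 0 ≤ U - (k : ℝ) * c := hnn k hk'
    have := succ_mul_pow_sub_le hx (by linarith : U - (k : ℝ) * c ≤ U - (k : ℝ) * c + c) n
    calc ((n : ℝ) + 1) * c * (U - k * c) ^ n
        = (n + 1) * (U - (k : ℝ) * c) ^ n * ((U - (k : ℝ) * c + c) - (U - (k : ℝ) * c)) := by ring
      _ ≤ (U - (k : ℝ) * c + c) ^ (n + 1) - (U - (k : ℝ) * c) ^ (n + 1) := this
      _ = f k - f (k + 1) := by rw [hf]; push_cast; ring_nf
  have tele : ∑ k ∈ range (m + 1), (f k - f (k + 1)) = f 0 - f (m + 1) :=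
    Finset.sum_range_sub' f (m + 1)
  have hsum := Finset.sum_le_sum key
  rw [tele] at hsum
  have hf0 : f 0 = (U + c) ^ (n + 1) := by simp [hf]
  have hfm : 0 ≤ f (m + 1) := by
    show (0:ℝ) ≤ (U + c - ((m + 1 : ℕ) : ℝ) * c) ^ (n + 1)
    apply pow_nonneg; push_cast; linarith
  rw [le_div_iff₀ (by positivity)]
  calc (∑ k ∈ range (m + 1), (U - k * c) ^ n) * ((n + 1) * c)
      = ∑ k ∈ range (m + 1), ((n : ℝ) + 1) * c * (U - k * c) ^ n := by
        rw [Finset.sum_mul]; refine Finset.sum_congr rfl fun k _ => by ring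
    _ ≤ f 0 - f (m + 1) := hsum
    _ ≤ (U + c) ^ (n + 1) := by rw [hf0]; linarith

/-- finiteness of the solution set -/
lemma finite_sol {s : ℕ} (c : Fin s → ℝ) (hc : ∀ i, 0 < c i) (T : ℝ) :
    {e : Fin s → ℕ | ∑ i, (e i : ℝ) * c i ≤ T}.Finite := by
  have hsub : {e : Fin s → ℕ | ∑ i, (e i : ℝ) * c i ≤ T} ⊆
      Set.pi Set.univ (fun i => Set.Iic (⌊T / c i⌋₊)) := by
    intro e he i _
    simp only [Set.mem_Iic]
    have h1 : (e i : ℝ) * c i ≤ ∑ j, (e j : ℝ) * c j :=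
      Finset.single_le_sum (f := fun j => (e j : ℝ) * c j)
        (fun j _ => mul_nonneg (Nat.cast_nonneg _) (hc j).le) (Finset.mem_univ i)
    have h2 : (e i : ℝ) ≤ T / c i := by
      rw [le_div_iff₀ (hc i)]; exact h1.trans he
    exact Nat.le_floor h2
  exact (Set.Finite.pi (fun i => Set.finite_Iic _)).subset hsub

/-- decomposition of the count over the first coordinate -/
lemma card_succ {s : ℕ} (c : Fin (s + 1) → ℝ) (hc : ∀ i, 0 < c i) (T : ℝ) (hT : 0 ≤ T) :
    Nat.card {e : Fin (s + 1) → ℕ | ∑ i, (e i : ℝ) * c i ≤ T}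
    = ∑ k ∈ range (⌊T / c 0⌋₊ + 1),
        Nat.card {e : Fin s → ℕ | ∑ i, (e i : ℝ) * c i.succ ≤ T - k * c 0} := by
  set m := ⌊T / c 0⌋₊ with hm
  set β : Fin (m + 1) → Type := fun k =>
    {e : Fin s → ℕ | ∑ i, (e i : ℝ) * c i.succ ≤ T - (k : ℕ) * c 0} with hβ
  have e1 : {e : Fin (s + 1) → ℕ | ∑ i, (e i : ℝ) * c i ≤ T} ≃ Σ k : Fin (m + 1), β k := by
    refine ⟨fun x => ?_, fun y => ?_, ?_, ?_⟩
    · obtain ⟨e, he⟩ := x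
      have hsum : ∑ i, (e i : ℝ) * c i ≤ T := he
      rw [Fin.sum_univ_succ] at hsum
      have htail : 0 ≤ ∑ i : Fin s, (e i.succ : ℝ) * c i.succ :=
        Finset.sum_nonneg fun i _ => mul_nonneg (Nat.cast_nonneg _) (hc i.succ).le
      have hb : e 0 ≤ m := by
        apply Nat.le_floor
        rw [le_div_iff₀ (hc 0)]
        linarith
      refine ⟨⟨e 0, Nat.lt_succ_of_le hb⟩, ⟨Fin.tail e, ?_⟩⟩
      show ∑ i : Fin s, (Fin.tail e i : ℝ) * c i.succ ≤ T - (e 0 : ℝ) * c 0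
      simp only [Fin.tail]
      linarith
    · obtain ⟨k, e, he⟩ := y
      refine ⟨Fin.cons (k : ℕ) e, ?_⟩
      show ∑ i, ((Fin.cons (k : ℕ) e : Fin (s+1) → ℕ) i : ℝ) * c i ≤ T
      rw [Fin.sum_univ_succ]
      simp only [Fin.cons_zero, Fin.cons_succ]
      have : ∑ i : Fin s, (e i : ℝ) * c i.succ ≤ T - (k : ℕ) * c 0 := he
      linarith
    · rintro ⟨e, he⟩
      simp only [Fin.cons_self_tail]
    · rintro ⟨k, e, he⟩
      rfl
  letI : ∀ k : Fin (m + 1), Fintype (β k) := fun k =>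
    Set.Finite.fintype (finite_sol (fun i => c i.succ) (fun i => hc i.succ) _)
  rw [Nat.card_congr e1, Nat.card_eq_fintype_card, Fintype.card_sigma]
  calc ∑ k : Fin (m + 1), Fintype.card (β k)
      = ∑ k : Fin (m + 1), (fun j : ℕ =>
          Nat.card {e : Fin s → ℕ | ∑ i, (e i : ℝ) * c i.succ ≤ T - j * c 0}) (k : ℕ) := by
        refine Finset.sum_congr rfl fun k _ => ?_
        rw [← Nat.card_eq_fintype_card]
    _ = ∑ k ∈ range (m + 1), (fun j : ℕ =>
          Nat.card {e : Fin s → ℕ | ∑ i, (e i : ℝ) * c i.succ ≤ T - j * c 0}) k :=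
        Fin.sum_univ_eq_sum_range (fun j : ℕ =>
          Nat.card {e : Fin s → ℕ | ∑ i, (e i : ℝ) * c i.succ ≤ T - j * c 0}) (m + 1)

lemma count_lower : ∀ (s : ℕ) (c : Fin s → ℝ), (∀ i, 0 < c i) → ∀ T : ℝ, 0 ≤ T →
    T ^ s / (s.factorial * ∏ i, c i)
      ≤ (Nat.card {e : Fin s → ℕ | ∑ i, (e i : ℝ) * c i ≤ T} : ℝ) := by
  intro s
  induction s with
  | zero =>
    intro c hc T hT
    have huniv : {e : Fin 0 → ℕ | ∑ i, (e i : ℝ) * c i ≤ T} = Set.univ := by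
      ext e; simp [hT]
    rw [huniv]
    rw [Nat.card_congr (Equiv.Set.univ _), Nat.card_unique]
    simp
  | succ s ih =>
    intro c hc T hT
    rw [card_succ c hc T hT]
    push_cast
    set m := ⌊T / c 0⌋₊ with hm
    have hc0 : 0 < c 0 := hc 0
    have hP' : 0 < ∏ i : Fin s, c i.succ := Finset.prod_pos fun i _ => hc i.succ
    have hfact : (0 : ℝ) < s.factorial := by positivity
    have hnn : ∀ k ∈ range (m + 1), 0 ≤ T - (k : ℝ) * c 0 := by
      intro k hk
      have hk' : k ≤ m := Nat.lt_succ_iff.mp (Finset.mem_range.mp hk)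
      have h3 : (k : ℝ) ≤ T / c 0 := le_trans (Nat.cast_le.mpr hk') (Nat.floor_le (by positivity))
      nlinarith [(le_div_iff₀ hc0).mp h3]
    calc T ^ (s + 1) / ((s + 1).factorial * ∏ i, c i)
        = (T ^ (s + 1) / ((s + 1) * c 0)) / (s.factorial * ∏ i : Fin s, c i.succ) := by
          rw [div_div]
          congr 1
          rw [Fin.prod_univ_succ, Nat.factorial_succ]
          push_cast
          ring
      _ ≤ (∑ k ∈ range (m + 1), (T - k * c 0) ^ s) / (s.factorial * ∏ i : Fin s, c i.succ) := by
          apply div_le_div_of_nonneg_right _ (by positivity)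
          exact sum_lower hc0 hT s
      _ = ∑ k ∈ range (m + 1), (T - k * c 0) ^ s / (s.factorial * ∏ i : Fin s, c i.succ) :=
          Finset.sum_div _ _ _
      _ ≤ ∑ k ∈ range (m + 1),
            (Nat.card {e : Fin s → ℕ | ∑ i, (e i : ℝ) * c i.succ ≤ T - k * c 0} : ℝ) := by
          refine Finset.sum_le_sum fun k hk => ?_
          exact ih (fun i => c i.succ) (fun i => hc i.succ) (T - k * c 0) (hnn k hk)

lemma count_upper : ∀ (s : ℕ) (c : Fin s → ℝ), (∀ i, 0 < c i) → ∀ T : ℝ, 0 ≤ T →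
    (Nat.card {e : Fin s → ℕ | ∑ i, (e i : ℝ) * c i ≤ T} : ℝ)
      ≤ (T + ∑ i, c i) ^ s / (s.factorial * ∏ i, c i) := by
  intro s
  induction s with
  | zero =>
    intro c hc T hT
    have huniv : {e : Fin 0 → ℕ | ∑ i, (e i : ℝ) * c i ≤ T} = Set.univ := by
      ext e; simp [hT]
    rw [huniv]
    rw [Nat.card_congr (Equiv.Set.univ _), Nat.card_unique]
    simp
  | succ s ih =>
    intro c hc T hT
    rw [card_succ c hc T hT]
    push_cast
    set m := ⌊T / c 0⌋₊ with hm
    have hc0 : 0 < c 0 := hc 0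
    have hP' : 0 < ∏ i : Fin s, c i.succ := Finset.prod_pos fun i _ => hc i.succ
    have hfact : (0 : ℝ) < s.factorial := by positivity
    have hC' : 0 ≤ ∑ i : Fin s, c i.succ := Finset.sum_nonneg fun i _ => (hc i.succ).le
    have hnn : ∀ k ∈ range (m + 1), 0 ≤ T - (k : ℝ) * c 0 := by
      intro k hk
      have hk' : k ≤ m := Nat.lt_succ_iff.mp (Finset.mem_range.mp hk)
      have h3 : (k : ℝ) ≤ T / c 0 := le_trans (Nat.cast_le.mpr hk') (Nat.floor_le (by positivity))
      nlinarith [(le_div_iff₀ hc0).mp h3]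
    have hmT : 0 ≤ T - (m : ℝ) * c 0 := hnn m (Finset.self_mem_range_succ m)
    calc ∑ k ∈ range (m + 1),
          (Nat.card {e : Fin s → ℕ | ∑ i, (e i : ℝ) * c i.succ ≤ T - k * c 0} : ℝ)
        ≤ ∑ k ∈ range (m + 1),
            (T - k * c 0 + ∑ i : Fin s, c i.succ) ^ s / (s.factorial * ∏ i : Fin s, c i.succ) := by
          refine Finset.sum_le_sum fun k hk => ?_
          exact ih (fun i => c i.succ) (fun i => hc i.succ) (T - k * c 0) (hnn k hk)
      _ = (∑ k ∈ range (m + 1), ((T + ∑ i : Fin s, c i.succ) - k * c 0) ^ s)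
            / (s.factorial * ∏ i : Fin s, c i.succ) := by
          rw [Finset.sum_div]
          refine Finset.sum_congr rfl fun k _ => by ring_nf
      _ ≤ (((T + ∑ i : Fin s, c i.succ) + c 0) ^ (s + 1) / ((s + 1) * c 0))
            / (s.factorial * ∏ i : Fin s, c i.succ) := by
          apply div_le_div_of_nonneg_right _ (by positivity)
          exact sum_upper hc0 (T + ∑ i : Fin s, c i.succ) m (by linarith) s
      _ = (T + ∑ i, c i) ^ (s + 1) / ((s + 1).factorial * ∏ i, c i) := by
          rw [div_div]
          rw [Fin.prod_univ_succ, Fin.sum_univ_succ, Nat.factorial_succ]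
          push_cast
          rw [show T + (c 0 + ∑ i : Fin s, c i.succ) = T + ∑ i : Fin s, c i.succ + c 0 by ring]
          congr 1
          ring

/-- Counting in a free commutative monoid on `s` generators (modeled as `Fin s → ℕ`)
with weighted length `ℓ f = ∑ f i · log (d i)`, `d i ≥ 2`: if `h` is comparable to
`exp ∘ ℓ`, then `#{f : h f ≤ B} / (log B)^s → 1/(s! ∏ log d_i)`. -/
theorem stmt4 (s : ℕ) (d : Fin s → ℕ) (hd : ∀ i, 2 ≤ d i)
    (h : (Fin s → ℕ) → ℝ) (A B' : ℝ) (hA : 0 < A) (hAB : A ≤ B')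
    (hbd : ∀ f : Fin s → ℕ,
      A * Real.exp (∑ i, (f i : ℝ) * Real.log (d i)) ≤ h f ∧
      h f ≤ B' * Real.exp (∑ i, (f i : ℝ) * Real.log (d i))) :
    Filter.Tendsto
      (fun B : ℝ => (Nat.card {f : Fin s → ℕ | h f ≤ B} : ℝ) / (Real.log B) ^ s)
      Filter.atTop (nhds (1 / (s.factorial * ∏ i, Real.log (d i)))) := by
  set c : Fin s → ℝ := fun i => Real.log (d i) with hcdef
  have hc : ∀ i, 0 < c i := by
    intro i
    apply Real.log_pos
    have h2 : 1 < d i := by have := hd i; omega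
    exact_mod_cast h2
  set P := ∏ i, c i with hPdef
  have hP : 0 < P := Finset.prod_pos fun i _ => hc i
  set K : ℝ := s.factorial * P with hKdef
  have hK : 0 < K := by positivity
  have hB' : 0 < B' := lt_of_lt_of_le hA hAB
  set C : ℝ := ∑ i, c i with hCdef
  have hC : 0 ≤ C := Finset.sum_nonneg fun i _ => (hc i).le
  -- squeeze
  have hlog : Filter.Tendsto Real.log atTop atTop := Real.tendsto_log_atTop
  have lim_gen : ∀ a : ℝ, Filter.Tendsto
      (fun B : ℝ => ((Real.log B + a) / Real.log B) ^ s / K) atTop (nhds (1 / K)) := by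
    intro a
    have h1 : Filter.Tendsto (fun B : ℝ => a / Real.log B) atTop (nhds 0) :=
      Filter.Tendsto.div_atTop tendsto_const_nhds hlog
    have h2 : Filter.Tendsto (fun B : ℝ => 1 + a / Real.log B) atTop (nhds 1) := by
      have := h1.const_add 1
      simpa using this
    have h3 : Filter.Tendsto (fun B : ℝ => (1 + a / Real.log B) ^ s) atTop (nhds 1) := by
      have := h2.pow s
      simpa using this
    have h4 : Filter.Tendsto (fun B : ℝ => (1 + a / Real.log B) ^ s / K) atTop (nhds (1 / K)) :=
      h3.div_const K
    apply h4.congr'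
    have hev : ∀ᶠ B : ℝ in atTop, 0 < Real.log B := by
      filter_upwards [Filter.eventually_gt_atTop 1] with B hB using Real.log_pos hB
    filter_upwards [hev] with B hB
    have : (Real.log B + a) / Real.log B = 1 + a / Real.log B := by
      field_simp
    rw [this]
  apply tendsto_of_tendsto_of_tendsto_of_le_of_le'
    (lim_gen (-Real.log B')) (lim_gen (-Real.log A + C))
  · -- lower bound eventually
    filter_upwards [Filter.eventually_gt_atTop 1, Filter.eventually_ge_atTop B',
      Filter.eventually_ge_atTop 1] with B hB1 hBB' _
    have hB0 : 0 < B := lt_trans one_pos hB1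
    have hlogB : 0 < Real.log B := Real.log_pos hB1
    set T1 : ℝ := Real.log B - Real.log B' with hT1def
    have hT1 : 0 ≤ T1 := by
      have := Real.log_le_log hB' hBB'
      simp [hT1def]; linarith
    -- the set {h f ≤ B} is finite
    have hfin2 : {f : Fin s → ℕ | h f ≤ B}.Finite := by
      apply (finite_sol c hc (Real.log B - Real.log A)).subset
      intro f hf
      have hb := (hbd f).1
      have hexp : Real.exp (∑ i, (f i : ℝ) * c i) ≤ B / A := by
        rw [le_div_iff₀ hA]
        calc Real.exp (∑ i, (f i : ℝ) * c i) * A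
            = A * Real.exp (∑ i, (f i : ℝ) * Real.log (d i)) := by rw [hcdef]; ring
          _ ≤ h f := hb
          _ ≤ B := hf
      have := Real.log_le_log (Real.exp_pos _) hexp
      rw [Real.log_exp, Real.log_div (ne_of_gt hB0) (ne_of_gt hA)] at this
      exact this
    have hsub1 : {f : Fin s → ℕ | ∑ i, (f i : ℝ) * c i ≤ T1} ⊆ {f : Fin s → ℕ | h f ≤ B} := by
      intro f hf
      have hb := (hbd f).2
      calc h f ≤ B' * Real.exp (∑ i, (f i : ℝ) * Real.log (d i)) := hb
        _ ≤ B' * Real.exp T1 := by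
            apply mul_le_mul_of_nonneg_left _ hB'.le
            exact Real.exp_le_exp.mpr hf
        _ = B := by
            rw [hT1def, Real.exp_sub, Real.exp_log hB0, Real.exp_log hB']
            field_simp
    have hcard : T1 ^ s / K ≤ (Nat.card {f : Fin s → ℕ | h f ≤ B} : ℝ) := by
      calc T1 ^ s / K ≤ (Nat.card {f : Fin s → ℕ | ∑ i, (f i : ℝ) * c i ≤ T1} : ℝ) :=
            count_lower s c hc T1 hT1
        _ ≤ (Nat.card {f : Fin s → ℕ | h f ≤ B} : ℝ) := by
            exact_mod_cast Nat.card_mono hfin2 hsub1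
    have hrw : (Real.log B + -Real.log B') / Real.log B = T1 / Real.log B := by
      rw [hT1def]; ring_nf
    have hcard' : T1 ^ s ≤ (Nat.card {f : Fin s → ℕ | h f ≤ B} : ℝ) * K :=
      (div_le_iff₀ hK).mp hcard
    rw [hrw, div_pow, div_div, div_le_div_iff₀ (by positivity) (by positivity)]
    nlinarith [pow_nonneg hlogB.le s]
  · -- upper bound eventually
    filter_upwards [Filter.eventually_gt_atTop 1, Filter.eventually_ge_atTop A] with B hB1 hBA
    have hB0 : 0 < B := lt_trans one_pos hB1
    have hlogB : 0 < Real.log B := Real.log_pos hB1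
    set T2 : ℝ := Real.log B - Real.log A with hT2def
    have hT2 : 0 ≤ T2 := by
      have := Real.log_le_log hA hBA
      simp [hT2def]; linarith
    have hsub2 : {f : Fin s → ℕ | h f ≤ B} ⊆ {f : Fin s → ℕ | ∑ i, (f i : ℝ) * c i ≤ T2} := by
      intro f hf
      have hb := (hbd f).1
      have hexp : Real.exp (∑ i, (f i : ℝ) * c i) ≤ B / A := by
        rw [le_div_iff₀ hA]
        calc Real.exp (∑ i, (f i : ℝ) * c i) * A
            = A * Real.exp (∑ i, (f i : ℝ) * Real.log (d i)) := by rw [hcdef]; ring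
          _ ≤ h f := hb
          _ ≤ B := hf
      have := Real.log_le_log (Real.exp_pos _) hexp
      rw [Real.log_exp, Real.log_div (ne_of_gt hB0) (ne_of_gt hA)] at this
      exact this
    have hcard : (Nat.card {f : Fin s → ℕ | h f ≤ B} : ℝ) ≤ (T2 + C) ^ s / K := by
      calc (Nat.card {f : Fin s → ℕ | h f ≤ B} : ℝ)
          ≤ (Nat.card {f : Fin s → ℕ | ∑ i, (f i : ℝ) * c i ≤ T2} : ℝ) := by
            exact_mod_cast Nat.card_mono (finite_sol c hc T2) hsub2
        _ ≤ (T2 + C) ^ s / K := count_upper s c hc T2 hT2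
    have hrw : (Real.log B + (-Real.log A + C)) / Real.log B = (T2 + C) / Real.log B := by
      rw [hT2def]; ring_nf
    have hcard' : (Nat.card {f : Fin s → ℕ | h f ≤ B} : ℝ) * K ≤ (T2 + C) ^ s :=
      (le_div_iff₀ hK).mp hcard
    rw [hrw, div_pow, div_div, div_le_div_iff₀ (by positivity) (by positivity)]
    nlinarith [pow_nonneg hlogB.le s]
end

section
/- Let K be a field of characteristic 0 and let h₁, h₂ ∈ K[x] be nonconstant polynomials with h₂ nonconstant of degree d(h₂) and leading coefficient ℓ(h₂). Then Res(h₁∘h₂, h₁'∘h₂) = ℓ(h₂)^{(d(h₁)² − d(h₁))·d(h₂)} · Res(h₁, h₁')^{d(h₂)}, where Res denotes the resultant and h₁' the derivative of h₁. -/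
open Polynomial

/-- The resultant `Res(f,g) = ℓ(f)^{deg g} · ∏_{f(α)=0} g(α)`, the product taken over the
roots of `f` (with multiplicity) in an algebraic closure. -/
noncomputable def res {K : Type*} [Field K] (f g : K[X]) : AlgebraicClosure K :=
  (algebraMap K (AlgebraicClosure K) f.leadingCoeff) ^ g.natDegree *
    ((f.map (algebraMap K (AlgebraicClosure K))).roots.map
      (fun α => (g.map (algebraMap K (AlgebraicClosure K))).eval α)).prod

/-- `Res(h₁∘h₂, h₁'∘h₂) = ℓ(h₂)^{(d(h₁)² − d(h₁))·d(h₂)} · Res(h₁, h₁')^{d(h₂)}`. -/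
theorem stmt5 {K : Type*} [Field K] [CharZero K]
    (h₁ h₂ : K[X]) (h1c : 0 < h₁.natDegree) (h2c : 0 < h₂.natDegree) :
    res (h₁.comp h₂) (h₁.derivative.comp h₂) =
      (algebraMap K (AlgebraicClosure K) h₂.leadingCoeff) ^
          ((h₁.natDegree ^ 2 - h₁.natDegree) * h₂.natDegree) *
        (res h₁ h₁.derivative) ^ h₂.natDegree := by
  set L := AlgebraicClosure K
  set φ := algebraMap K L with hφ
  set F := h₁.map φ with hF
  set G := h₂.map φ with hG
  set F' := h₁.derivative.map φ with hF'
  have hd1 : h₁.natDegree ≠ 0 := h1c.ne'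
  have hd2 : h₂.natDegree ≠ 0 := h2c.ne'
  have h1ne : h₁ ≠ 0 := fun h => hd1 (by simp [h])
  have h2ne : h₂ ≠ 0 := fun h => hd2 (by simp [h])
  have hGd : G.natDegree = h₂.natDegree := natDegree_map φ
  have hderiv : h₁.derivative.natDegree = h₁.natDegree - 1 :=
    natDegree_eq_of_degree_eq_some (degree_derivative_eq h₁ h1c)
  have hFsp : F.Splits :=
    IsAlgClosed.splits F
  have hFfact := hFsp.eq_prod_roots
  have hFlc : F.leadingCoeff = φ h₁.leadingCoeff := leadingCoeff_map φ
  have hlcne : F.leadingCoeff ≠ 0 := by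
    rw [hFlc]; simpa using leadingCoeff_ne_zero.mpr h1ne
  have hcomp : F.comp G = C F.leadingCoeff * (F.roots.map fun a => G - C a).prod := by
    conv_lhs => rw [hFfact]
    rw [mul_comp, C_comp, multiset_prod_comp]
    simp [Multiset.map_map, Function.comp, sub_comp]
  have hroots : (F.comp G).roots = F.roots.bind fun a => (G - C a).roots := by
    rw [hcomp, roots_C_mul _ hlcne, roots_multiset_prod]
    · rw [Multiset.bind_map]
    · intro h
      obtain ⟨a, -, ha⟩ := Multiset.mem_map.mp h
      rw [sub_eq_zero] at ha
      exact hd2 (by rw [← hGd, ha, natDegree_C])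
  -- the product over roots of the composition
  have hprod : (((h₁.comp h₂).map φ).roots.map
      (fun α => ((h₁.derivative.comp h₂).map φ).eval α)).prod
      = ((F.roots.map fun a => F'.eval a).prod) ^ h₂.natDegree := by
    rw [Polynomial.map_comp, Polynomial.map_comp, ← hF, ← hF', ← hG, hroots,
      Multiset.map_bind, Multiset.prod_bind, ← Multiset.prod_map_pow]
    congr 1
    apply Multiset.map_congr rfl
    intro a _
    have hGa : (G - C a).natDegree = h₂.natDegree := by rw [natDegree_sub_C, hGd]
    have hcard : ((G - C a).roots).card = h₂.natDegree := by
      rw [splits_iff_card_roots.mp (IsAlgClosed.splits _), hGa]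
    have hconst : ((G - C a).roots.map fun β => (F'.comp G).eval β)
        = Multiset.replicate h₂.natDegree (F'.eval a) := by
      rw [← hcard, ← Multiset.card_map (fun β => (F'.comp G).eval β)]
      apply Multiset.eq_replicate_card.mpr
      intro b hb
      obtain ⟨β, hβ, rfl⟩ := Multiset.mem_map.mp hb
      have hne : (G - C a) ≠ 0 := fun h => hd2 (by rw [← hGa, h, natDegree_zero])
      have hroot := (mem_roots hne).mp hβ
      have hGb : G.eval β = a := by
        simpa [IsRoot, eval_sub, eval_C, sub_eq_zero] using hroot
      rw [eval_comp, hGb]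
    rw [hconst, Multiset.prod_replicate]
  -- assemble
  have hlead : (h₁.comp h₂).leadingCoeff = h₁.leadingCoeff * h₂.leadingCoeff ^ h₁.natDegree :=
    leadingCoeff_comp hd2
  have hdegc : (h₁.derivative.comp h₂).natDegree = (h₁.natDegree - 1) * h₂.natDegree := by
    rw [natDegree_comp, hderiv]
  have hsq : h₁.natDegree ^ 2 - h₁.natDegree = h₁.natDegree * (h₁.natDegree - 1) := by
    cases h₁.natDegree with
    | zero => simp
    | succ n => simp [pow_two, Nat.mul_succ, Nat.succ_sub_one]
  rw [res, res, hprod, hlead, hdegc, hderiv, map_mul, map_pow, hsq]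
  rw [← hF, ← hF']
  ring
end

section
/- Let K be a field of characteristic 0 and let S be a set of quadratic polynomials of the form a(x−c)² + b (a ≠ 0, common critical point c ∈ K). Let γ = (θ_1, θ_2, …) be a sequence of elements of S and set γ_n^+ = θ_1∘···∘θ_n, with ℓ_{γ,1} the leading coefficient of γ_1^+ = θ_1. If −ℓ_{γ,1}·γ_1^+(c), ℓ_{γ,1}·γ_2^+(c), …, ℓ_{γ,1}·γ_n^+(c) are all non-squares in K, then γ_n^+ is irreducible over K. -/
open Polynomial IntermediateField


section Aux
variable {F : Type*} [Field F]

lemma quad_irred {s : F} (hs : ¬ IsSquare s) (t : F) :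
    Irreducible ((X - C t) ^ 2 - C s) := by
  have h2 : Irreducible (X ^ 2 - C s : F[X]) :=
    X_pow_sub_C_irreducible_of_prime Nat.prime_two
      (fun b hb => hs ⟨b, by rw [← hb]; ring⟩)
  have := (MulEquiv.irreducible_iff
      ((algEquivAevalXAddC (-t) : F[X] ≃ₐ[F] F[X]) : F[X] ≃* F[X])).mpr h2
  convert this using 1
  show _ = aeval (X + C (-t)) (X ^ 2 - C s)
  simp [map_sub, sub_eq_add_neg]

lemma scale_irred {a : F} (ha : a ≠ 0) {p : F[X]}
    (hp : Irreducible p) : Irreducible (p.comp (C a * X)) := by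
  let φ : F[X] ≃ₐ[F] F[X] :=
    AlgEquiv.ofAlgHom (aeval (C a * X)) (aeval (C a⁻¹ * X))
      (by ext : 1; simp [← mul_assoc, ← C_mul, mul_inv_cancel₀ ha, inv_mul_cancel₀ ha])
      (by ext : 1; simp [← mul_assoc, ← C_mul, mul_inv_cancel₀ ha, inv_mul_cancel₀ ha])
  have h : p.comp (C a * X) = φ p := by
    simp only [φ, AlgEquiv.ofAlgHom, AlgEquiv.coe_mk, aeval_def, Polynomial.algebraMap_eq]
    rfl
  rw [h]
  exact (MulEquiv.irreducible_iff (φ : F[X] ≃* F[X])).mpr hp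

lemma norm_gen_sub {K E : Type*} [Field K] [Field E] [Algebra K E]
    (x : E) (hx : IsIntegral K x) (β : K) :
    Algebra.norm K (AdjoinSimple.gen K x - algebraMap K K⟮x⟯ β) =
      (-1) ^ (minpoly K x).natDegree * (minpoly K x).eval β := by
  have hgen : IsIntegral K (AdjoinSimple.gen K x) := by
    have := IntermediateField.adjoin.finiteDimensional hx
    exact IsIntegral.of_finite K _
  set z : K⟮x⟯ := AdjoinSimple.gen K x - algebraMap K K⟮x⟯ β with hz
  have hzint : IsIntegral K z := hgen.sub (isIntegral_algebraMap)
  have hmem : (IntermediateField.adjoin.powerBasis hx).gen ∈ Algebra.adjoin K ({z} : Set K⟮x⟯) := by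
    have h1 : z ∈ Algebra.adjoin K ({z} : Set K⟮x⟯) := Algebra.self_mem_adjoin_singleton K z
    have h2 : algebraMap K K⟮x⟯ β ∈ Algebra.adjoin K ({z} : Set K⟮x⟯) :=
      Subalgebra.algebraMap_mem _ β
    have : (IntermediateField.adjoin.powerBasis hx).gen = z + algebraMap K K⟮x⟯ β := by
      simp [hz]
    rw [this]
    exact Subalgebra.add_mem _ h1 h2
  set pb' := PowerBasis.ofAdjoinEqTop hzint (by
    rw [eq_top_iff, ← (IntermediateField.adjoin.powerBasis hx).adjoin_gen_eq_top]
    exact Algebra.adjoin_le (Set.singleton_subset_iff.mpr hmem)) with hpb'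
  have hgen' : pb'.gen = z := by simp [hpb']
  have hminz : minpoly K z = (minpoly K x).comp (X + C β) := by
    rw [hz, ← IntermediateField.minpoly_gen K x]
    exact minpoly.sub_algebraMap _ β
  have hdim : pb'.dim = (minpoly K z).natDegree := by
    simp [hpb', PowerBasis.ofAdjoinEqTop_dim, hgen']
  have := Algebra.PowerBasis.norm_gen_eq_coeff_zero_minpoly pb'
  rw [hgen'] at this
  rw [this, hdim, hminz]
  rw [natDegree_comp]
  simp [coeff_zero_eq_eval_zero, eval_comp]

end Aux


/-- Stoll-type irreducibility test for right iteration of quadratics with common critical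
point `c`: with `γ 0 = X`, `γ (k+1) = γ k ∘ θ k` (so `γ n = θ 0 ∘ ⋯ ∘ θ (n-1)`), if
`−ℓ_{γ,1}·γ_1(c), ℓ_{γ,1}·γ_2(c), …, ℓ_{γ,1}·γ_n(c)` are all non-squares in `K`, then
`γ n` is irreducible over `K`. Here `ℓ_{γ,1} = a 0` is the leading coefficient of `θ 0`. -/
theorem stmt8 {K : Type*} [Field K] [CharZero K]
    (c : K) (a b : ℕ → K) (ha : ∀ i, a i ≠ 0)
    (θ : ℕ → K[X])
    (hθ : ∀ i, θ i = C (a i) * (X - C c) ^ 2 + C (b i))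
    (γ : ℕ → K[X]) (hγ0 : γ 0 = X)
    (hγ : ∀ k, γ (k + 1) = (γ k).comp (θ k))
    (n : ℕ) (hn : 1 ≤ n)
    (h1 : ¬ IsSquare (-(a 0) * (γ 1).eval c))
    (hm : ∀ m, 2 ≤ m → m ≤ n → ¬ IsSquare (a 0 * (γ m).eval c)) :
    Irreducible (γ n) := by
  -- basic facts about θ
  have hθdeg : ∀ i, (θ i).natDegree = 2 := by
    intro i; rw [hθ i]; compute_degree <;> simp [ha i]
  have hθlc : ∀ i, (θ i).leadingCoeff = a i := by
    intro i
    rw [leadingCoeff, hθdeg i, hθ i]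
    rw [coeff_add, coeff_C]
    norm_num
    have h1 : ((X - C c) ^ 2 : K[X]).coeff 2 = 1 := by
      have h2 := ((monic_X_sub_C c).pow 2).coeff_natDegree
      rwa [natDegree_pow, natDegree_X_sub_C, mul_one] at h2
    rw [h1, mul_one]
  have hθc : ∀ i, (θ i).eval c = b i := by
    intro i; simp [hθ i]
  -- degree of γ
  have hγdeg : ∀ k, (γ k).natDegree = 2 ^ k := by
    intro k
    induction k with
    | zero => simp [hγ0]
    | succ k ih => rw [hγ k, natDegree_comp, ih, hθdeg, pow_succ]
  have hγne : ∀ k, γ k ≠ 0 := by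
    intro k h
    have := hγdeg k
    rw [h] at this
    simp at this
    exact (pow_ne_zero k (two_ne_zero)) this.symm
  -- leading coefficient of γ k for k ≥ 1: a 0 times a square
  have hγlc : ∀ k, 1 ≤ k → ∃ t : K, t ≠ 0 ∧ (γ k).leadingCoeff = a 0 * t ^ 2 := by
    intro k hk
    induction k with
    | zero => omega
    | succ k ih =>
      rcases Nat.eq_or_lt_of_le hk with h | h
      · refine ⟨1, one_ne_zero, ?_⟩
        have : k = 0 := by omega
        subst this
        rw [hγ 0, hγ0, X_comp, hθlc 0]
        ring
      · have hk1 : 1 ≤ k := by omega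
        obtain ⟨t, ht, hlc⟩ := ih hk1
        refine ⟨t * (a k) ^ (2 ^ (k - 1)), mul_ne_zero ht (pow_ne_zero _ (ha k)), ?_⟩
        rw [hγ k, leadingCoeff_comp (by rw [hθdeg]; norm_num), hlc, hθlc, hγdeg]
        have : (2 : ℕ) ^ k = (2 ^ (k - 1)) * 2 := by
          rw [← pow_succ]; congr 1; omega
        rw [this, pow_mul]
        ring
  -- evaluation link
  have hevalc : ∀ k, (γ (k+1)).eval c = (γ k).eval (b k) := by
    intro k; rw [hγ k, eval_comp, hθc k]
  -- base case
  have hγ1 : γ 1 = θ 0 := by rw [hγ 0, hγ0, X_comp]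
  have base : Irreducible (γ 1) := by
    have h0 : γ 1 = C (a 0) * ((X - C c) ^ 2 - C (-(b 0) / (a 0))) := by
      rw [hγ1, hθ 0]
      have hb : a 0 * (-(b 0) / (a 0)) = -(b 0) := by
        rw [mul_comm]; exact div_mul_cancel₀ _ (ha 0)
      rw [mul_sub, ← C_mul, hb, map_neg, sub_neg_eq_add]
    have hs : ¬ IsSquare (-(b 0) / (a 0)) := by
      rintro ⟨q, hq⟩
      apply h1
      have hγ1c : (γ 1).eval c = b 0 := by rw [hγ1, hθc 0]
      refine ⟨a 0 * q, ?_⟩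
      rw [hγ1c]
      have hb : a 0 * (-(b 0) / (a 0)) = -(b 0) := by
        rw [mul_comm]; exact div_mul_cancel₀ _ (ha 0)
      have : -(a 0) * b 0 = a 0 * (a 0 * (-(b 0) / (a 0))) := by rw [hb]; ring
      rw [this, hq]
      ring
    have hirr := quad_irred hs c
    rw [h0]
    have hu : IsUnit (C (a 0)) := isUnit_C.mpr (isUnit_iff_ne_zero.mpr (ha 0))
    exact (Associated.irreducible ⟨hu.unit, by rw [IsUnit.unit_spec, mul_comm]⟩ hirr)
  -- induction
  have key : ∀ k, 1 ≤ k → k ≤ n → Irreducible (γ k) := by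
    intro k
    induction k with
    | zero => omega
    | succ k ih =>
      intro _ hkn
      rcases Nat.eq_zero_or_pos k with rfl | hk
      · exact base
      have ihirr : Irreducible (γ k) := ih hk (by omega)
      set A := a k with hA
      set B := b k with hB
      set u : K[X] := (X - C c) ^ 2 + C (B / A) with hu
      have humonic : u.Monic := by
        apply Monic.add_of_left ((monic_X_sub_C c).pow 2)
        apply lt_of_le_of_lt (degree_C_le)
        rw [degree_pow, degree_X_sub_C]
        norm_num
      set g1 : K[X] := (γ k).comp (C A * X) with hg1
      have hdegCAX : (C A * X : K[X]).natDegree = 1 := by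
        rw [natDegree_C_mul (ha k), natDegree_X]
      have hlcCAX : (C A * X : K[X]).leadingCoeff = A := by
        rw [leadingCoeff_mul, leadingCoeff_C, leadingCoeff_X, mul_one]
      have hlcg1 : g1.leadingCoeff = (γ k).leadingCoeff * A ^ (2 ^ k) := by
        rw [hg1, leadingCoeff_comp (by rw [hdegCAX]; norm_num), hlcCAX, hγdeg]
      have hg1ne : g1 ≠ 0 := by
        intro h
        have : g1.leadingCoeff = 0 := by rw [h, leadingCoeff_zero]
        rw [hlcg1] at this
        exact (mul_ne_zero (leadingCoeff_ne_zero.mpr (hγne k)) (pow_ne_zero _ (ha k))) this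
      set ℓ := g1.leadingCoeff with hℓdef
      have hℓ : ℓ ≠ 0 := leadingCoeff_ne_zero.mpr hg1ne
      set f : K[X] := g1 * C ℓ⁻¹ with hf
      have hfmonic : f.Monic := monic_mul_leadingCoeff_inv hg1ne
      have hcompθ : C A * u = θ k := by
        rw [hθ k, hu, mul_add, ← C_mul]
        have : A * (B / A) = B := by
          rw [← mul_div_assoc]; exact mul_div_cancel_left₀ B (ha k)
        rw [this]
      have hγsucc : γ (k + 1) = C ℓ * (f.comp u) := by
        rw [hγ k, ← hcompθ, hf, mul_comp, C_comp]
        have h2 : (γ k).comp (C A * u) = g1.comp u := by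
          rw [hg1, comp_assoc, mul_comp, C_comp, X_comp]
        rw [h2, mul_comm (g1.comp u) (C ℓ⁻¹), ← mul_assoc, ← C_mul,
          mul_inv_cancel₀ hℓ, C_1, one_mul]
      have hfirr : Irreducible f := by
        have hg1irr : Irreducible g1 := scale_irred (ha k) ihirr
        have hu' : IsUnit (C ℓ⁻¹ : K[X]) :=
          isUnit_C.mpr (isUnit_iff_ne_zero.mpr (inv_ne_zero hℓ))
        exact (Associated.irreducible ⟨hu'.unit, by rw [IsUnit.unit_spec]⟩ hg1irr)
      have hfdeg : f.natDegree = 2 ^ k := by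
        rw [hf, natDegree_mul hg1ne (fun h => (inv_ne_zero hℓ) (by simpa using h)),
          natDegree_C, add_zero, hg1, natDegree_comp, hdegCAX, mul_one, hγdeg]
      have hfevB : f.eval (B / A) = (γ (k+1)).eval c * ℓ⁻¹ := by
        rw [hf, eval_mul, eval_C, hg1, eval_comp, eval_mul, eval_C, eval_X]
        have : A * (B / A) = B := by
          rw [← mul_div_assoc]; exact mul_div_cancel_left₀ B (ha k)
        rw [this, hevalc k]
      -- the key composition irreducibility
      have hcomp : Irreducible (f.comp u) := by
        apply Polynomial.irreducible_comp hfmonic humonic hfirr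
        intro E _ _ x hx
        have hxint : IsIntegral K x := by
          by_contra h
          rw [minpoly.eq_zero h] at hx
          exact hfmonic.ne_zero hx.symm
        have hmap : u.map (algebraMap K K⟮x⟯) - C (AdjoinSimple.gen K x) =
            (X - C (algebraMap K K⟮x⟯ c)) ^ 2
              - C (AdjoinSimple.gen K x - algebraMap K K⟮x⟯ (B / A)) := by
          rw [hu]
          push_cast [Polynomial.map_add, Polynomial.map_pow, Polynomial.map_sub,
            Polynomial.map_one, map_X, map_C, map_sub, map_add, map_neg]
          ring
        rw [hmap]
        apply quad_irred
        rintro ⟨w, hw⟩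
        have hFD := IntermediateField.adjoin.finiteDimensional hxint
        have hns := norm_gen_sub x hxint (B / A)
        rw [hx, hfdeg, hfevB] at hns
        have heven : Even (2 ^ k) := Nat.even_pow.mpr ⟨even_two, by omega⟩
        rw [heven.neg_one_pow, one_mul] at hns
        rw [hw, map_mul] at hns
        set q := Algebra.norm K w with hq
        -- hns : q * q = (γ (k+1)).eval c * ℓ⁻¹
        obtain ⟨t, ht, hlc⟩ := hγlc k hk
        apply hm (k + 1) (by omega) hkn
        refine ⟨a 0 * t * A ^ (2 ^ (k - 1)) * q, ?_⟩
        have hγev : (γ (k+1)).eval c = ℓ * (q * q) := by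
          rw [hns]
          field_simp
        rw [hγev, hlcg1, hlc]
        have h2k : (2 : ℕ) ^ k = 2 ^ (k - 1) * 2 := by
          rw [← pow_succ]; congr 1; omega
        have hA2 : A ^ (2 ^ k) = (A ^ (2 ^ (k - 1))) ^ 2 := by
          rw [h2k, pow_mul]
        rw [hA2]
        ring
      -- conclude
      rw [hγsucc]
      have huℓ : IsUnit (C ℓ : K[X]) := isUnit_C.mpr (isUnit_iff_ne_zero.mpr hℓ)
      exact (Associated.irreducible ⟨huℓ.unit, by rw [IsUnit.unit_spec, mul_comm]⟩ hcomp)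
  exact key n hn le_rfl
end

section
/- Let S = {x² + c_1, …, x² + c_s} with distinct integers c_i, and suppose 0 is an escape point for S: there exists r ≥ 0 such that for every composition g of exactly r elements of S, the Weil height h(g(0)) exceeds B_S = C_S/(d_S − 1), where C_S = max_i log|2c_i| (assuming all c_i ≠ 0) and d_S = 2. Then there exist positive constants B_1, B_2 such that for every composition f of n ≥ r elements of S, B_1 ≤ h(f(0))/2^n ≤ B_2. -/
/-- The logarithmic Weil height of a rational number. -/
noncomputable def weilHeight (q : ℚ) : ℝ := Real.log (max |(q.num : ℝ)| (q.den : ℝ))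

/-- The value at `q` of the composition `φ_{i₁} ∘ ⋯ ∘ φ_{iₖ}` of the quadratic maps
`φ_i(x) = x² + c i` along the word `w = [i₁, …, iₖ]`. -/
def applyWord {s : ℕ} (c : Fin s → ℤ) (w : List (Fin s)) (q : ℚ) : ℚ :=
  w.foldr (fun i x => x ^ 2 + (c i : ℚ)) q

lemma wh_num_den (x : ℚ) (m : ℤ) :
    (x^2 + (m:ℚ)).num = x.num^2 + m * x.den^2 ∧ ((x^2 + (m:ℚ)).den : ℤ) = (x.den:ℤ)^2 := by
  have hq : (0:ℤ) < (x.den:ℤ)^2 := by positivity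
  have hcop : IsCoprime (x.num^2 + m * (x.den:ℤ)^2) ((x.den:ℤ)^2) := by
    have h1 : IsCoprime x.num (x.den:ℤ) := by
      rw [Int.isCoprime_iff_gcd_eq_one]; exact x.reduced
    have h2 : IsCoprime (x.num^2) ((x.den:ℤ)^2) := h1.pow
    have := h2.add_mul_left_left m
    convert this using 2; exacts [rfl, by ring]
  have hcop' : Nat.Coprime (x.num^2 + m * (x.den:ℤ)^2).natAbs ((x.den:ℤ)^2).natAbs := by
    rw [Nat.coprime_iff_gcd_eq_one, ← Int.gcd_eq_natAbs]
    exact Int.isCoprime_iff_gcd_eq_one.mp hcop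
  have heq : x^2 + (m:ℚ) = ((x.num^2 + m * (x.den:ℤ)^2 : ℤ) : ℚ) / (((x.den:ℤ)^2 : ℤ) : ℚ) := by
    have hden : ((x.den:ℚ)) ≠ 0 := by exact_mod_cast x.den_ne_zero
    conv_lhs => rw [← Rat.num_div_den x]
    push_cast
    field_simp
  constructor
  · rw [heq]; exact_mod_cast Rat.num_div_eq_of_coprime hq hcop'
  · rw [heq]; exact_mod_cast Rat.den_div_eq_of_coprime hq hcop'

/-- The key height step estimate. -/
lemma wh_step (x : ℚ) (m : ℤ) (hm : m ≠ 0) :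
    2 * weilHeight x - Real.log |2*(m:ℝ)| ≤ weilHeight (x^2 + (m:ℚ)) ∧
    weilHeight (x^2 + (m:ℚ)) ≤ 2 * weilHeight x + Real.log |2*(m:ℝ)| := by
  obtain ⟨hnum, hden⟩ := wh_num_den x m
  set P : ℝ := |(x.num : ℝ)| with hP
  set Q : ℝ := (x.den : ℝ) with hQ
  have hQ1 : 1 ≤ Q := by rw [hQ]; exact_mod_cast x.pos
  have hP0 : 0 ≤ P := abs_nonneg _
  set A : ℝ := |((x^2 + (m:ℚ)).num : ℝ)| with hA
  have hAval : A = |(x.num:ℝ)^2 + (m:ℝ) * Q^2| := by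
    rw [hA, hnum]; push_cast; ring_nf; rfl
  have hDval : ((x^2 + (m:ℚ)).den : ℝ) = Q^2 := by
    rw [hQ]; exact_mod_cast hden
  have hm1 : 1 ≤ |(m:ℝ)| := by
    rw [← Int.cast_abs]; exact_mod_cast Int.one_le_abs hm
  set M : ℝ := max P Q with hM
  set M' : ℝ := max A (Q^2) with hM'
  have hM1 : 1 ≤ M := le_trans hQ1 (le_max_right _ _)
  have hM'1 : 1 ≤ M' := le_trans (one_le_pow₀ hQ1) (le_max_right _ _)
  have habs : |(x.num:ℝ)| = P := rfl
  have hPM : P ≤ M := le_max_left _ _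
  have hQM : Q ≤ M := le_max_right _ _
  have hwh : weilHeight x = Real.log M := rfl
  have hwh' : weilHeight (x^2 + (m:ℚ)) = Real.log M' := by
    rw [weilHeight, hDval, ← hA, ← hM']
  clear_value M M' A P Q
  have key1 : M' ≤ 2 * |(m:ℝ)| * M^2 := by
    have h1 : A ≤ P^2 + |(m:ℝ)| * Q^2 := by
      rw [hAval]
      calc |(x.num:ℝ)^2 + (m:ℝ)*Q^2| ≤ |(x.num:ℝ)^2| + |(m:ℝ)*Q^2| := abs_add_le _ _
      _ = P^2 + |(m:ℝ)| * Q^2 := by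
          rw [abs_mul, abs_pow, abs_of_nonneg (by positivity : (0:ℝ) ≤ Q^2), hP]
    have h2 : P^2 ≤ M^2 := by gcongr
    have h3 : Q^2 ≤ M^2 := by gcongr
    have hmM2 : M^2 ≤ |(m:ℝ)| * M^2 := le_mul_of_one_le_left (by positivity) hm1
    have ha2 : A ≤ 2 * |(m:ℝ)| * M^2 :=
      le_trans h1 (by linarith [mul_le_mul_of_nonneg_left h3 (abs_nonneg ((m:ℝ)))])
    have hq2 : Q^2 ≤ 2 * |(m:ℝ)| * M^2 := by linarith
    rw [hM']
    exact max_le ha2 hq2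
  have key2 : M^2 ≤ 2 * |(m:ℝ)| * M' := by
    have hAM' : A ≤ M' := hM' ▸ le_max_left _ _
    have hQM' : Q^2 ≤ M' := hM' ▸ le_max_right _ _
    have h1 : P^2 ≤ A + |(m:ℝ)| * Q^2 := by
      have : (x.num:ℝ)^2 = ((x.num:ℝ)^2 + (m:ℝ)*Q^2) + (-(m:ℝ))*Q^2 := by ring
      calc P^2 = |(x.num:ℝ)^2| := by rw [abs_pow, hP]
      _ = |((x.num:ℝ)^2 + (m:ℝ)*Q^2) + (-(m:ℝ))*Q^2| := by rw [← this]
      _ ≤ |(x.num:ℝ)^2 + (m:ℝ)*Q^2| + |(-(m:ℝ))*Q^2| := abs_add_le _ _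
      _ = A + |(m:ℝ)| * Q^2 := by
          rw [hAval, abs_mul, abs_neg, abs_of_nonneg (by positivity : (0:ℝ) ≤ Q^2)]
    have hM'0 : (0:ℝ) ≤ M' := by linarith
    have hmM' : M' ≤ |(m:ℝ)| * M' := le_mul_of_one_le_left hM'0 hm1
    have hPsq : P^2 ≤ 2 * |(m:ℝ)| * M' := by
      linarith [mul_le_mul_of_nonneg_left hQM' (abs_nonneg ((m:ℝ)))]
    have hQsq : Q^2 ≤ 2 * |(m:ℝ)| * M' := by linarith
    have : M^2 = max (P^2) (Q^2) := by
      rw [hM]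
      rcases le_total P Q with h | h
      · rw [max_eq_right h, max_eq_right (by nlinarith [sq_nonneg P, sq_nonneg Q])]
      · rw [max_eq_left h, max_eq_left (by nlinarith [sq_nonneg P, sq_nonneg Q])]
    rw [this]
    exact max_le hPsq hQsq
  have hlogM : 2 * weilHeight x = Real.log (M^2) := by
    rw [hwh, Real.log_pow]; push_cast; ring
  have h2m : |2*(m:ℝ)| = 2 * |(m:ℝ)| := by rw [abs_mul]; norm_num
  have hMpos : (0:ℝ) < M := lt_of_lt_of_le one_pos hM1
  have hM'pos : (0:ℝ) < M' := lt_of_lt_of_le one_pos hM'1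
  have h2mpos : (0:ℝ) < 2 * |(m:ℝ)| := by positivity
  constructor
  · rw [hwh', hlogM, h2m]
    have := Real.log_le_log (by positivity) key2
    rw [Real.log_mul (ne_of_gt h2mpos) (ne_of_gt hM'pos)] at this
    linarith
  · rw [hwh', hlogM, h2m]
    have := Real.log_le_log (by positivity) key1
    rw [Real.log_mul (ne_of_gt h2mpos) (ne_of_gt (by positivity : (0:ℝ) < M^2))] at this
    linarith

lemma wh_telescope {s : ℕ} (c : Fin s → ℤ) (hc0 : ∀ i, c i ≠ 0)
    (C : ℝ) (hC : ∀ i, Real.log |2 * (c i : ℝ)| ≤ C)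
    (w : List (Fin s)) (q : ℚ) :
    2 ^ w.length * weilHeight q - C * (2 ^ w.length - 1) ≤ weilHeight (applyWord c w q) ∧
    weilHeight (applyWord c w q) ≤ 2 ^ w.length * weilHeight q + C * (2 ^ w.length - 1) := by
  induction w with
  | nil => simp [applyWord]
  | cons i w ih =>
    have hstep := wh_step (applyWord c w q) (c i) (hc0 i)
    have happ : applyWord c (i :: w) q = (applyWord c w q)^2 + ((c i : ℤ) : ℚ) := rfl
    have hCi := hC i
    have hpow : (0:ℝ) < 2 ^ w.length := by positivity
    rw [happ]
    simp only [List.length_cons]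
    have hps : (2:ℝ) ^ (w.length + 1) = 2 * 2 ^ w.length := by ring
    rw [hps]
    constructor <;> linarith [ih.1, ih.2, hstep.1, hstep.2, hCi]

lemma wh_C_pos {s : ℕ} (c : Fin s → ℤ) (hc0 : ∀ i, c i ≠ 0) (i : Fin s) :
    0 < Real.log |2 * (c i : ℝ)| := by
  apply Real.log_pos
  have : (1:ℤ) ≤ |c i| := Int.one_le_abs (hc0 i)
  have : (1:ℝ) ≤ |(c i : ℝ)| := by rw [← Int.cast_abs]; exact_mod_cast this
  rw [abs_mul]
  rw [abs_of_nonneg (by norm_num : (0:ℝ) ≤ 2)]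
  linarith

/-- If `0` is an escape point for `S = {x²+c₁, …, x²+c_s}` (distinct nonzero integers `c_i`),
i.e. every composition of exactly `r` maps sends `0` to a point of height exceeding
`B_S = C_S/(d_S−1) = max_i log|2c_i|`, then there are constants `0 < B₁, B₂` with
`B₁ ≤ h(f(0))/2^n ≤ B₂` for every composition `f` of `n ≥ r` maps from `S`. -/
theorem stmt10 (s : ℕ) (hs : 0 < s) (c : Fin s → ℤ)
    (hinj : Function.Injective c) (hc0 : ∀ i, c i ≠ 0)
    (r : ℕ)
    (hesc : ∀ w : List (Fin s), w.length = r →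
      (⨆ i : Fin s, Real.log |2 * (c i : ℝ)|) < weilHeight (applyWord c w 0)) :
    ∃ B1 B2 : ℝ, 0 < B1 ∧ 0 < B2 ∧
      ∀ w : List (Fin s), r ≤ w.length →
        B1 ≤ weilHeight (applyWord c w 0) / 2 ^ w.length ∧
        weilHeight (applyWord c w 0) / 2 ^ w.length ≤ B2 := by
  have hne : Nonempty (Fin s) := ⟨⟨0, hs⟩⟩
  set C : ℝ := ⨆ i : Fin s, Real.log |2 * (c i : ℝ)| with hCdef
  have hC : ∀ i, Real.log |2 * (c i : ℝ)| ≤ C := by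
    intro i
    rw [hCdef]
    exact le_ciSup (Set.Finite.bddAbove (Set.finite_range fun i => Real.log |2 * (c i : ℝ)|)) i
  have hCpos : 0 < C := lt_of_lt_of_le (wh_C_pos c hc0 ⟨0, hs⟩) (hC ⟨0, hs⟩)
  obtain ⟨fmin, -, hfmin⟩ := Finset.exists_min_image Finset.univ
    (fun f : Fin r → Fin s => weilHeight (applyWord c (List.ofFn f) 0))
    ⟨Classical.arbitrary _, Finset.mem_univ _⟩
  obtain ⟨fmax, -, hfmax⟩ := Finset.exists_max_image Finset.univ
    (fun f : Fin r → Fin s => weilHeight (applyWord c (List.ofFn f) 0))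
    ⟨Classical.arbitrary _, Finset.mem_univ _⟩
  simp only [Finset.mem_univ, forall_const] at hfmin hfmax
  set Hmin : ℝ := weilHeight (applyWord c (List.ofFn fmin) 0) with hHmin
  set Hmax : ℝ := weilHeight (applyWord c (List.ofFn fmax) 0) with hHmax
  have hminC : C < Hmin := hesc _ (by simp)
  have hminmax : Hmin ≤ Hmax := hfmax fmin
  have hpr : (0:ℝ) < 2 ^ r := by positivity
  refine ⟨(Hmin - C) / 2 ^ r, (Hmax + C) / 2 ^ r,
    div_pos (by linarith) hpr, div_pos (by linarith) hpr, ?_⟩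
  intro w hw
  obtain ⟨w1, w2, rfl, hw2len⟩ :
      ∃ w1 w2 : List (Fin s), w = w1 ++ w2 ∧ w2.length = r := by
    refine ⟨w.take (w.length - r), w.drop (w.length - r),
      (List.take_append_drop _ _).symm, ?_⟩
    rw [List.length_drop]; omega
  have hofn : List.ofFn (fun i : Fin r => w2.get (Fin.cast hw2len.symm i)) = w2 := by
    apply List.ext_get
    · simp [hw2len]
    · intro n h1 h2
      simp
  have hQmin : Hmin ≤ weilHeight (applyWord c w2 0) := by
    have h := hfmin (fun i : Fin r => w2.get (Fin.cast hw2len.symm i))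
    rwa [hofn] at h
  have hQmax : weilHeight (applyWord c w2 0) ≤ Hmax := by
    have h := hfmax (fun i : Fin r => w2.get (Fin.cast hw2len.symm i))
    rwa [hofn] at h
  have hsplit : applyWord c (w1 ++ w2) 0 = applyWord c w1 (applyWord c w2 0) := by
    rw [applyWord, applyWord, applyWord, List.foldr_append]
  obtain ⟨htel1, htel2⟩ := wh_telescope c hc0 C hC w1 (applyWord c w2 0)
  rw [hsplit, List.length_append, hw2len]
  have hpm : (0:ℝ) < 2 ^ w1.length := by positivity
  have h2n : (2:ℝ) ^ (w1.length + r) = 2 ^ w1.length * 2 ^ r := pow_add 2 _ _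
  have hpn : (0:ℝ) < 2 ^ (w1.length + r) := by positivity
  have hCm : C * (2 ^ w1.length - 1) ≤ C * 2 ^ w1.length - C := by ring_nf; linarith
  constructor
  · rw [div_le_div_iff₀ hpr hpn, h2n]
    nlinarith [htel1, hQmin, hCm, hpm, hCpos]
  · rw [div_le_div_iff₀ hpn hpr, h2n]
    nlinarith [htel2, hQmax, hpm, hCpos]
end
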